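/- arXiv:1211.3294 — 3 statements merged into one kernel-verified Lean document; each statement's English description precedes it below -/
import Mathlib

section
/- The Choi map φ_{C₁} : M_3(ℂ) → M_3(ℂ), defined by φ_{C₁}((x_{ij})) = (1/2)·[[x₁₁+x₂₂, −x₁₂, −x₁₃], [−x₂₁, x₂₂+x₃₃, −x₂₃], [−x₃₁, −x₃₂, x₃₃+x₁₁]], is a positive linear map. -/
open Matrix ComplexOrder

/-- The Choi map `φ_{C₁}` on `M₃(ℂ)`. -/
noncomputable def choi1 (x : Matrix (Fin 3) (Fin 3) ℂ) : Matrix (Fin 3) (Fin 3) ℂ :=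
  (1 / 2 : ℂ) •
    !![x 0 0 + x 1 1, -x 0 1, -x 0 2;
       -x 1 0, x 1 1 + x 2 2, -x 1 2;
       -x 2 0, -x 2 1, x 2 2 + x 0 0]

private lemma keyR (a0 a1 a2 b0 b1 b2 : ℝ) (ha0 : 0 ≤ a0) (ha1 : 0 ≤ a1) (ha2 : 0 ≤ a2)
    (hb0 : 0 ≤ b0) (hb1 : 0 ≤ b1) (hb2 : 0 ≤ b2) :
    (a0*b0+a1*b1+a2*b2)^2 ≤
      2*(a0^2*b0^2+a1^2*b1^2+a2^2*b2^2) + b1^2*a0^2 + b2^2*a1^2 + b0^2*a2^2 := by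
  nlinarith [sq_nonneg (a0*b0 - a1*b1), sq_nonneg (a1*b1 - a2*b2), sq_nonneg (a0*b0 - a2*b2),
    sq_nonneg (a0*b1 - a1*b0), sq_nonneg (a1*b2 - a2*b1), sq_nonneg (a2*b0 - a0*b2),
    sq_nonneg (a0*b1 - a1*b1), sq_nonneg (a1*b2 - a2*b2), sq_nonneg (a2*b0 - a0*b0),
    mul_nonneg (mul_nonneg ha0 hb0) (mul_nonneg ha1 hb1),
    mul_nonneg (mul_nonneg ha1 hb1) (mul_nonneg ha2 hb2),
    mul_nonneg (mul_nonneg ha0 hb0) (mul_nonneg ha2 hb2)]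

private lemma key2 (w0 w1 w2 v0 v1 v2 : ℂ) :
    Complex.normSq (w0*v0 + w1*v1 + w2*v2) ≤
      2*(Complex.normSq v0 * Complex.normSq w0 + Complex.normSq v1 * Complex.normSq w1
          + Complex.normSq v2 * Complex.normSq w2)
        + Complex.normSq w1 * Complex.normSq v0 + Complex.normSq w2 * Complex.normSq v1
        + Complex.normSq w0 * Complex.normSq v2 := by
  have habs : ‖(w0*v0 + w1*v1 + w2*v2)‖ ≤
      ‖v0‖ * ‖w0‖ + ‖v1‖ * ‖w1‖
        + ‖v2‖ * ‖w2‖ := by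
    calc ‖(w0*v0 + w1*v1 + w2*v2)‖
        ≤ ‖(w0*v0 + w1*v1)‖ + ‖(w2*v2)‖ := norm_add_le _ _
      _ ≤ ‖(w0*v0)‖ + ‖(w1*v1)‖ + ‖(w2*v2)‖ := by
          gcongr; exact norm_add_le _ _
      _ = ‖v0‖ * ‖w0‖ + ‖v1‖ * ‖w1‖
            + ‖v2‖ * ‖w2‖ := by
          simp [norm_mul]; ring
  have h1 : Complex.normSq (w0*v0 + w1*v1 + w2*v2)
      ≤ (‖v0‖ * ‖w0‖ + ‖v1‖ * ‖w1‖
          + ‖v2‖ * ‖w2‖)^2 := by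
    rw [← Complex.sq_norm]
    exact pow_le_pow_left₀ (norm_nonneg _) habs 2
  refine h1.trans ?_
  have := keyR (‖v0‖) (‖v1‖) (‖v2‖)
    (‖w0‖) (‖w1‖) (‖w2‖)
    (norm_nonneg _) (norm_nonneg _) (norm_nonneg _)
    (norm_nonneg _) (norm_nonneg _) (norm_nonneg _)
  simp only [← Complex.sq_norm]
  nlinarith [this]

open Complex in
private lemma keyC (w0 w1 w2 v0 v1 v2 : ℂ) :
    0 ≤ (2*(starRingEnd ℂ) w0*w0 + (starRingEnd ℂ) w1*w1) * ((starRingEnd ℂ) v0*v0)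
      + (2*(starRingEnd ℂ) w1*w1 + (starRingEnd ℂ) w2*w2) * ((starRingEnd ℂ) v1*v1)
      + (2*(starRingEnd ℂ) w2*w2 + (starRingEnd ℂ) w0*w0) * ((starRingEnd ℂ) v2*v2)
      - (starRingEnd ℂ) (w0*v0 + w1*v1 + w2*v2) * (w0*v0 + w1*v1 + w2*v2) := by
  have h : (2*(starRingEnd ℂ) w0*w0 + (starRingEnd ℂ) w1*w1) * ((starRingEnd ℂ) v0*v0)
      + (2*(starRingEnd ℂ) w1*w1 + (starRingEnd ℂ) w2*w2) * ((starRingEnd ℂ) v1*v1)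
      + (2*(starRingEnd ℂ) w2*w2 + (starRingEnd ℂ) w0*w0) * ((starRingEnd ℂ) v2*v2)
      - (starRingEnd ℂ) (w0*v0 + w1*v1 + w2*v2) * (w0*v0 + w1*v1 + w2*v2)
      = ((2*(normSq v0 * normSq w0 + normSq v1 * normSq w1 + normSq v2 * normSq w2)
          + normSq w1 * normSq v0 + normSq w2 * normSq v1 + normSq w0 * normSq v2
          - normSq (w0*v0 + w1*v1 + w2*v2) : ℝ) : ℂ) := by
    push_cast [Complex.normSq_eq_conj_mul_self]
    simp only [map_add, _root_.map_mul]
    ring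
  rw [h, Complex.zero_le_real, sub_nonneg]
  exact key2 w0 w1 w2 v0 v1 v2

private lemma choi1_isHermitian {X : Matrix (Fin 3) (Fin 3) ℂ} (hX : X.IsHermitian) :
    (choi1 X).IsHermitian := by
  have h : ∀ i j, star (X j i) = X i j := fun i j => by
    have := congrFun (congrFun hX i) j
    rwa [Matrix.conjTranspose_apply] at this
  ext i j
  fin_cases i <;> fin_cases j <;>
    simp [choi1, Matrix.conjTranspose_apply, Matrix.smul_apply, smul_eq_mul,
      star_add, star_mul', star_neg, h]

set_option maxHeartbeats 2000000 in
theorem choi1_positive_linear :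
    IsLinearMap ℂ choi1 ∧
      ∀ X : Matrix (Fin 3) (Fin 3) ℂ, X.PosSemidef → (choi1 X).PosSemidef := by
  constructor
  · constructor
    · intro X Y
      ext i j
      fin_cases i <;> fin_cases j <;>
        simp [choi1, Matrix.add_apply, Matrix.smul_apply, smul_eq_mul] <;> ring
    · intro c X
      ext i j
      fin_cases i <;> fin_cases j <;>
        simp [choi1, Matrix.smul_apply, smul_eq_mul] <;> ring
  · intro X hX
    obtain ⟨B, rfl⟩ : ∃ B : Matrix (Fin 3) (Fin 3) ℂ, X = Bᴴ * B := by
      open scoped MatrixOrder Matrix.Norms.L2Operator in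
        exact CStarAlgebra.nonneg_iff_eq_star_mul_self.mp hX.nonneg
    refine Matrix.PosSemidef.of_dotProduct_mulVec_nonneg ?_ ?_
    · exact choi1_isHermitian (Matrix.posSemidef_conjTranspose_mul_self B).1
    · intro v
      have hform : dotProduct (star v) (choi1 (Bᴴ * B) *ᵥ v)
          = ∑ k : Fin 3, (1/2 : ℂ) *
            ((2*(starRingEnd ℂ) (B k 0)*(B k 0) + (starRingEnd ℂ) (B k 1)*(B k 1))
                * ((starRingEnd ℂ) (v 0)*(v 0))
              + (2*(starRingEnd ℂ) (B k 1)*(B k 1) + (starRingEnd ℂ) (B k 2)*(B k 2))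
                * ((starRingEnd ℂ) (v 1)*(v 1))
              + (2*(starRingEnd ℂ) (B k 2)*(B k 2) + (starRingEnd ℂ) (B k 0)*(B k 0))
                * ((starRingEnd ℂ) (v 2)*(v 2))
              - (starRingEnd ℂ) (B k 0*(v 0) + B k 1*(v 1) + B k 2*(v 2))
                * (B k 0*(v 0) + B k 1*(v 1) + B k 2*(v 2))) := by
        simp [choi1, dotProduct, Matrix.mulVec, Matrix.mul_apply,
          Matrix.conjTranspose_apply, Fin.sum_univ_three, Matrix.smul_apply, smul_eq_mul,
          Pi.star_apply, RCLike.star_def, map_add, _root_.map_mul]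
        ring
      rw [hform]
      refine Finset.sum_nonneg fun k _ => ?_
      have h2 : (0:ℂ) ≤ (1/2 : ℂ) := by
        rw [show (1/2 : ℂ) = ((1/2 : ℝ) : ℂ) by norm_num, Complex.zero_le_real]; norm_num
      exact mul_nonneg h2 (keyC (B k 0) (B k 1) (B k 2) (v 0) (v 1) (v 2))
end

section
/- The Choi map φ_{C₁} : M_3(ℂ) → M_3(ℂ) (as defined by φ_{C₁}((x_{ij})) = (1/2)·[[x₁₁+x₂₂, −x₁₂, −x₁₃], [−x₂₁, x₂₂+x₃₃, −x₂₃], [−x₃₁, −x₃₂, x₃₃+x₁₁]]) is not completely positive. -/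
set_option maxHeartbeats 2000000


open Matrix ComplexOrder

/-- The extension `id_d ⊗ φ` of a map `φ` on `M_n(ℂ)`, acting blockwise. -/
noncomputable def matExt {n : ℕ} (φ : Matrix (Fin n) (Fin n) ℂ → Matrix (Fin n) (Fin n) ℂ)
    (d : ℕ) (ρ : Matrix (Fin d × Fin n) (Fin d × Fin n) ℂ) :
    Matrix (Fin d × Fin n) (Fin d × Fin n) ℂ :=
  Matrix.of fun p q => φ (Matrix.of fun a b => ρ (p.1, a) (q.1, b)) p.2 q.2

/-- The Choi map `φ_{C₁}` is not completely positive. -/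
theorem choi1_not_completely_positive :
    ¬ ∀ (d : ℕ) (ρ : Matrix (Fin d × Fin 3) (Fin d × Fin 3) ℂ),
        ρ.PosSemidef → (matExt choi1 d ρ).PosSemidef := by
  intro h
  -- the maximally entangled state
  set A : Matrix (Fin 1) (Fin 3 × Fin 3) ℂ :=
    Matrix.of fun _ p => if p.1 = p.2 then 1 else 0 with hA
  have hρ : (Aᴴ * A).PosSemidef := Matrix.posSemidef_conjTranspose_mul_self A
  have hC := h 3 (Aᴴ * A) hρ
  -- test vector
  set v : Fin 3 × Fin 3 → ℂ := fun p => if p.1 = p.2 then 1 else 0 with hv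
  have hpos := hC.dotProduct_mulVec_nonneg v
  have : star v ⬝ᵥ (matExt choi1 3 (Aᴴ * A)) *ᵥ v = (-3/2 : ℂ) := by
    simp only [hA, hv, matExt, choi1, dotProduct, Matrix.mulVec, Matrix.mul_apply,
      Matrix.of_apply, Pi.star_apply, Fintype.sum_prod_type, Fin.sum_univ_succ,
      Fin.sum_univ_zero, Matrix.conjTranspose_apply]
    norm_num [Matrix.smul_apply, Fin.ext_iff]
    simp [Matrix.cons_val]
    norm_num
  rw [this] at hpos
  have : (0:ℝ) ≤ -3/2 := by
    have := hpos
    rw [Complex.le_def] at this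
    simpa using this.1
  linarith
end

section
/- The two Choi maps are related by unitary automorphisms: φ_{C₁} = U(3π/2) ∘ φ_{C₂} ∘ U(π/2), where U(θ) acts as X ↦ U(θ) X U(θ)† with U(θ) the rotation matrix [[cos θ, 0, sin θ], [0, 1, 0], [−sin θ, 0, cos θ]]. -/
open Matrix ComplexOrder

/-- The Choi map `φ_{C₂}` on `M₃(ℂ)`. -/
noncomputable def choi2 (x : Matrix (Fin 3) (Fin 3) ℂ) : Matrix (Fin 3) (Fin 3) ℂ :=
  (1 / 2 : ℂ) •
    !![x 0 0 + x 2 2, -x 0 1, -x 0 2;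
       -x 1 0, x 1 1 + x 0 0, -x 1 2;
       -x 2 0, -x 2 1, x 2 2 + x 1 1]

/-- The rotation matrix `U(θ)`. -/
noncomputable def rotU (θ : ℝ) : Matrix (Fin 3) (Fin 3) ℂ :=
  !![(Real.cos θ : ℂ), 0, (Real.sin θ : ℂ);
     0, 1, 0;
     (-Real.sin θ : ℂ), 0, (Real.cos θ : ℂ)]

/-- `φ_{C₁} = U(3π/2) ∘ φ_{C₂} ∘ U(π/2)`. -/
theorem choi1_eq_conj_choi2 :
    ∀ X : Matrix (Fin 3) (Fin 3) ℂ,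
      choi1 X =
        rotU (3 * Real.pi / 2) *
          choi2 (rotU (Real.pi / 2) * X * (rotU (Real.pi / 2))ᴴ) *
            (rotU (3 * Real.pi / 2))ᴴ := by
  intro X
  have h1 : (3 * Real.pi / 2) = Real.pi + Real.pi / 2 := by ring
  have hc : Real.cos (3 * Real.pi / 2) = 0 := by
    rw [h1, Real.cos_add]; simp
  have hs : Real.sin (3 * Real.pi / 2) = -1 := by
    rw [h1, Real.sin_add]; simp
  ext i j
  fin_cases i <;> fin_cases j <;>
    simp [choi1, choi2, rotU, hc, hs, Matrix.mul_apply, Matrix.vecMul, dotProduct, Fin.sum_univ_three,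
      Matrix.conjTranspose_apply]
end
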